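/- arXiv:1107.2720 — 2 statements merged into one kernel-verified Lean document; each statement's English description precedes it below -/
import Mathlib

section
/- For every t > 0, the nine vectors ψ_k ⊗ φ_k (k = 1,…,9) are linearly independent, hence span ℂ⁹ ≅ ℂ³ ⊗ ℂ³. -/
open Complex

/-- `s t` is the positive square root of `t`, as a complex number. -/
noncomputable def rt (t : ℝ) : ℂ := (Real.sqrt t : ℂ)

/-- The vectors ψ₁,…,ψ₉ in ℂ³ (indexed by `Fin 9`). -/
noncomputable def psi (t : ℝ) : Fin 9 → Fin 3 → ℂ :=
  ![![1, 1, 1],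
    ![1, -1, 1],
    ![1, Complex.I, -Complex.I],
    ![0, rt t, 1],
    ![0, rt t, Complex.I],
    ![1, 0, rt t],
    ![Complex.I, 0, rt t],
    ![rt t, 1, 0],
    ![rt t, Complex.I, 0]]

/-- The vectors φ₁,…,φ₉ in ℂ³ (indexed by `Fin 9`). -/
noncomputable def phi (t : ℝ) : Fin 9 → Fin 3 → ℂ :=
  ![![1, 1, 1],
    ![1, -1, 1],
    ![1, -Complex.I, Complex.I],
    ![0, rt t, (t : ℂ)],
    ![0, rt t, -(t : ℂ) * Complex.I],
    ![(t : ℂ), 0, rt t],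
    ![-(t : ℂ) * Complex.I, 0, rt t],
    ![rt t, (t : ℂ), 0],
    ![rt t, -(t : ℂ) * Complex.I, 0]]

/-- Kronecker product of two vectors in ℂ³, as a vector in ℂ⁹,
with the standard ordering `(i,j) ↦ 3*i + j`. -/
lemma cv5 {α : Type*} {m : ℕ} (x : α) (u : Fin m.succ.succ.succ.succ.succ → α) :
    Matrix.vecCons x u 5 = Matrix.vecHead (Matrix.vecTail (Matrix.vecTail (Matrix.vecTail (Matrix.vecTail (u))))) := rfl
lemma cv6 {α : Type*} {m : ℕ} (x : α) (u : Fin m.succ.succ.succ.succ.succ.succ → α) :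
    Matrix.vecCons x u 6 = Matrix.vecHead (Matrix.vecTail (Matrix.vecTail (Matrix.vecTail (Matrix.vecTail (Matrix.vecTail (u)))))) := rfl
lemma cv7 {α : Type*} {m : ℕ} (x : α) (u : Fin m.succ.succ.succ.succ.succ.succ.succ → α) :
    Matrix.vecCons x u 7 = Matrix.vecHead (Matrix.vecTail (Matrix.vecTail (Matrix.vecTail (Matrix.vecTail (Matrix.vecTail (Matrix.vecTail (u))))))) := rfl
lemma cv8 {α : Type*} {m : ℕ} (x : α) (u : Fin m.succ.succ.succ.succ.succ.succ.succ.succ → α) :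
    Matrix.vecCons x u 8 = Matrix.vecHead (Matrix.vecTail (Matrix.vecTail (Matrix.vecTail (Matrix.vecTail (Matrix.vecTail (Matrix.vecTail (Matrix.vecTail (u)))))))) := rfl
lemma fv3 : ((3 : Fin 9) : ℕ) = 3 := rfl
lemma fv4 : ((4 : Fin 9) : ℕ) = 4 := rfl
lemma fv5 : ((5 : Fin 9) : ℕ) = 5 := rfl
lemma fv6 : ((6 : Fin 9) : ℕ) = 6 := rfl
lemma fv7 : ((7 : Fin 9) : ℕ) = 7 := rfl
lemma fv8 : ((8 : Fin 9) : ℕ) = 8 := rfl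

theorem sum9 {M : Type*} [AddCommMonoid M] (f : Fin 9 → M) :
    ∑ k, f k = f 0 + f 1 + f 2 + f 3 + f 4 + f 5 + f 6 + f 7 + f 8 := by
  rw [Fin.sum_univ_castSucc, Fin.sum_univ_eight]; rfl

def kron9 (ψ φ : Fin 3 → ℂ) : Fin 9 → ℂ :=
  fun r => ψ ⟨r.val / 3, by omega⟩ * φ ⟨r.val % 3, by omega⟩

set_option maxHeartbeats 2000000 in
set_option maxRecDepth 8000 in
theorem stmt_7 (t : ℝ) (ht : 0 < t) :
    LinearIndependent ℂ (fun k : Fin 9 => kron9 (psi t k) (phi t k)) ∧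
      Submodule.span ℂ
        (Set.range fun k : Fin 9 => kron9 (psi t k) (phi t k)) = ⊤ := by
  have hli : LinearIndependent ℂ (fun k : Fin 9 => kron9 (psi t k) (phi t k)) := by
    rw [Fintype.linearIndependent_iff]
    intro c hc
    have h0 := congrFun hc 0
    have h1 := congrFun hc 1
    have h2 := congrFun hc 2
    have h3 := congrFun hc 3
    have h4 := congrFun hc 4
    have h5 := congrFun hc 5
    have h6 := congrFun hc 6
    have h7 := congrFun hc 7
    have h8 := congrFun hc 8
    simp only [Finset.sum_apply, Pi.smul_apply, Pi.zero_apply, smul_eq_mul, kron9, psi, phi,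
      rt, sum9, fv3, fv4, fv5, fv6, fv7, fv8, cv5, cv6, cv7, cv8, Matrix.cons_val_zero, Matrix.cons_val_one,
      Matrix.cons_val_two, Matrix.cons_val_three, Matrix.cons_val_four, Matrix.head_cons,
      Matrix.tail_cons, mul_zero, zero_mul, mul_one, one_mul, add_zero, zero_add,
      neg_mul, mul_neg, neg_neg] at h0 h1 h2 h3 h4 h5 h6 h7 h8
    norm_num at h0
    norm_num at h1
    norm_num at h2
    norm_num at h3
    norm_num at h4
    norm_num at h5
    norm_num at h6
    norm_num at h7
    norm_num at h8
    have hx : 0 < Real.sqrt t := Real.sqrt_pos.mpr ht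
    have hsq : ((Real.sqrt t : ℝ) : ℂ) ^ 2 = ((t : ℝ) : ℂ) := by
      norm_cast
      exact Real.sq_sqrt ht.le
    set s : ℂ := ((Real.sqrt t : ℝ) : ℂ) with hsdef
    have hts : ((t : ℝ) : ℂ) = s ^ 2 := hsq.symm
    rw [hts] at h0 h1 h4 h5 h6 h8
    have hI : Complex.I ^ 2 = -1 := Complex.I_sq
    have hD : ((8:ℂ)*s^9*(s^2+1)*(s^2+Complex.I)*((2:ℂ)*s^2-(1+Complex.I)*s+2*Complex.I)) ≠ 0 := by
      have hs0 : s ≠ 0 := by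
        rw [hsdef]
        exact_mod_cast hx.ne'
      refine mul_ne_zero (mul_ne_zero (mul_ne_zero (mul_ne_zero (by norm_num) (pow_ne_zero _ hs0)) ?_) ?_) ?_
      · rw [hsdef]
        have : ((Real.sqrt t : ℝ) : ℂ) ^ 2 + 1 = ((Real.sqrt t ^ 2 + 1 : ℝ) : ℂ) := by push_cast; ring
        rw [this]
        exact_mod_cast (by positivity : (Real.sqrt t ^ 2 + 1 : ℝ) ≠ 0)
      · intro h
        rw [hsq] at h
        have him := congrArg Complex.im h
        simp at him
      · intro h
        rw [hsq, hsdef] at h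
        have hre := congrArg Complex.re h
        have him := congrArg Complex.im h
        simp at hre him
        nlinarith [hre, him, hx, Real.sq_sqrt ht.le]
    have e0 : ((8:ℂ)*s^9*(s^2+1)*(s^2+Complex.I)*((2:ℂ)*s^2-(1+Complex.I)*s+2*Complex.I)) * c 0 = 0 := by
      linear_combination (norm := ring1) ((8:ℂ)*s^10 + (8:ℂ)*s^11 + (-8:ℂ)*s^13 + (-8:ℂ)*s^14 + (8:ℂ)*Complex.I*s^10 + (-8:ℂ)*Complex.I*s^11 + (-16:ℂ)*Complex.I*s^12 + (-8:ℂ)*Complex.I*s^13 + (8:ℂ)*Complex.I*s^14)*h0 + ((-4:ℂ)*s^10 + (-8:ℂ)*s^11 + (4:ℂ)*s^12 + (8:ℂ)*s^13 + (-8:ℂ)*Complex.I*s^9 + (-4:ℂ)*Complex.I*s^10 + (8:ℂ)*Complex.I*s^11 + (4:ℂ)*Complex.I*s^12)*h1 + ((4:ℂ)*s^12 + (8:ℂ)*s^13 + (4:ℂ)*s^14 + (8:ℂ)*s^15 + (8:ℂ)*Complex.I*s^11 + (4:ℂ)*Complex.I*s^12 + (8:ℂ)*Complex.I*s^13 + (4:ℂ)*Complex.I*s^14)*h2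 + ((-8:ℂ)*s^11 + (-4:ℂ)*s^12 + (8:ℂ)*s^13 + (4:ℂ)*s^14 + (4:ℂ)*Complex.I*s^12 + (8:ℂ)*Complex.I*s^13 + (-4:ℂ)*Complex.I*s^14 + (-8:ℂ)*Complex.I*s^15)*h3 + ((8:ℂ)*Complex.I*s^11 + (8:ℂ)*Complex.I*s^13)*h4 + ((-8:ℂ)*s^9 + (8:ℂ)*s^10 + (-8:ℂ)*s^13 + (8:ℂ)*Complex.I*s^9 + (-8:ℂ)*Complex.I*s^12 + (8:ℂ)*Complex.I*s^13)*h5 + ((-8:ℂ)*s^9 + (-4:ℂ)*s^10 + (-8:ℂ)*s^11 + (-4:ℂ)*s^12 + (4:ℂ)*Complex.I*s^10 + (8:ℂ)*Complex.I*s^11 + (4:ℂ)*Complex.I*s^12 + (8:ℂ)*Complex.I*s^13)*h6 + ((8:ℂ)*s^11 + (-8:ℂ)*s^14 + (8:ℂ)*s^15 + (8:ℂ)*Complex.I*s^11 + (-8:ℂ)*Complex.I*s^12 + (8:ℂ)*Complex.I*s^15)*h7 + ((-8:ℂ)*s^11 + (8:ℂ)*s^13 + (-16:ℂ)*Complex.I*s^10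 + (-16:ℂ)*Complex.I*s^14)*h8 + (((16:ℂ)*s^9 + (-8:ℂ)*s^10 + (16:ℂ)*s^11 + (-8:ℂ)*s^12)*c 0 + ((-8:ℂ)*s^9 + (8:ℂ)*s^11 + (-8:ℂ)*s^13 + (8:ℂ)*s^15)*c 2 + ((-16:ℂ)*Complex.I*s^12 + (-16:ℂ)*Complex.I*s^16)*c 4 + ((8:ℂ)*s^13 + (-8:ℂ)*s^15 + (8:ℂ)*Complex.I*s^12 + (-8:ℂ)*Complex.I*s^13 + (-16:ℂ)*Complex.I*s^14 + (-8:ℂ)*Complex.I*s^15 + (8:ℂ)*Complex.I*s^16)*c 6 + ((-8:ℂ)*s^12 + (-8:ℂ)*s^13 + (8:ℂ)*s^15 + (8:ℂ)*s^16 + (8:ℂ)*Complex.I*s^13 + (8:ℂ)*Complex.I*s^15)*c 8)*hI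
    have e1 : ((8:ℂ)*s^9*(s^2+1)*(s^2+Complex.I)*((2:ℂ)*s^2-(1+Complex.I)*s+2*Complex.I)) * c 1 = 0 := by
      linear_combination (norm := ring1) (0:ℂ)*h0 + ((8:ℂ)*s^9 + (-4:ℂ)*s^10 + (8:ℂ)*s^11 + (-4:ℂ)*s^12 + (4:ℂ)*Complex.I*s^10 + (-8:ℂ)*Complex.I*s^11 + (4:ℂ)*Complex.I*s^12 + (-8:ℂ)*Complex.I*s^13)*h1 + ((-4:ℂ)*s^12 + (8:ℂ)*s^13 + (-4:ℂ)*s^14 + (8:ℂ)*s^15 + (8:ℂ)*Complex.I*s^11 + (-4:ℂ)*Complex.I*s^12 + (8:ℂ)*Complex.I*s^13 + (-4:ℂ)*Complex.I*s^14)*h2 + ((4:ℂ)*s^12 + (-8:ℂ)*s^13 + (4:ℂ)*s^14 + (-8:ℂ)*s^15 + (-8:ℂ)*Complex.I*s^11 + (4:ℂ)*Complex.I*s^12 + (-8:ℂ)*Complex.I*s^13 + (4:ℂ)*Complex.I*s^14)*h3 + ((-8:ℂ)*s^10 + (8:ℂ)*s^14 + (8:ℂ)*Complex.I*s^10 + (-8:ℂ)*Complex.I*s^11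 + (16:ℂ)*Complex.I*s^12 + (-8:ℂ)*Complex.I*s^13 + (8:ℂ)*Complex.I*s^14)*h4 + (0:ℂ)*h5 + ((-8:ℂ)*s^9 + (4:ℂ)*s^10 + (-8:ℂ)*s^11 + (4:ℂ)*s^12 + (-4:ℂ)*Complex.I*s^10 + (8:ℂ)*Complex.I*s^11 + (-4:ℂ)*Complex.I*s^12 + (8:ℂ)*Complex.I*s^13)*h6 + (0:ℂ)*h7 + ((8:ℂ)*s^10 + (-8:ℂ)*s^14 + (-8:ℂ)*Complex.I*s^10 + (8:ℂ)*Complex.I*s^11 + (-16:ℂ)*Complex.I*s^12 + (8:ℂ)*Complex.I*s^13 + (-8:ℂ)*Complex.I*s^14)*h8 + (((16:ℂ)*s^9 + (-8:ℂ)*s^10 + (16:ℂ)*s^11 + (-8:ℂ)*s^12)*c 1 + ((8:ℂ)*s^12 + (-8:ℂ)*s^16 + (-8:ℂ)*Complex.I*s^12 + (8:ℂ)*Complex.I*s^13 + (-16:ℂ)*Complex.I*s^14 + (8:ℂ)*Complex.I*s^15 + (-8:ℂ)*Complex.I*s^16)*c 4 + ((-8:ℂ)*s^12 + (8:ℂ)*s^16)*c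 6 + ((8:ℂ)*Complex.I*s^12 + (-8:ℂ)*Complex.I*s^13 + (16:ℂ)*Complex.I*s^14 + (-8:ℂ)*Complex.I*s^15 + (8:ℂ)*Complex.I*s^16)*c 8)*hI
    have e2 : ((8:ℂ)*s^9*(s^2+1)*(s^2+Complex.I)*((2:ℂ)*s^2-(1+Complex.I)*s+2*Complex.I)) * c 2 = 0 := by
      linear_combination (norm := ring1) ((16:ℂ)*s^10 + (-8:ℂ)*s^11 + (8:ℂ)*s^13 + (-16:ℂ)*s^14 + (8:ℂ)*Complex.I*s^11 + (-32:ℂ)*Complex.I*s^12 + (8:ℂ)*Complex.I*s^13)*h0 + ((-8:ℂ)*s^9 + (8:ℂ)*s^10 + (-16:ℂ)*s^11 + (8:ℂ)*s^13 + (-8:ℂ)*Complex.I*s^9 + (16:ℂ)*Complex.I*s^11 + (-8:ℂ)*Complex.I*s^12 + (8:ℂ)*Complex.I*s^13)*h1 + (0:ℂ)*h2 + ((-8:ℂ)*s^11 + (16:ℂ)*s^13 + (-8:ℂ)*s^14 + (8:ℂ)*s^15 + (8:ℂ)*Complex.I*s^11 + (-8:ℂ)*Complex.I*s^12 + (16:ℂ)*Complex.I*s^13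 + (-8:ℂ)*Complex.I*s^15)*h3 + (0:ℂ)*h4 + ((8:ℂ)*s^9 + (-8:ℂ)*s^10 + (16:ℂ)*s^11 + (-8:ℂ)*s^13 + (8:ℂ)*Complex.I*s^9 + (-16:ℂ)*Complex.I*s^11 + (8:ℂ)*Complex.I*s^12 + (-8:ℂ)*Complex.I*s^13)*h5 + (0:ℂ)*h6 + ((8:ℂ)*s^11 + (-16:ℂ)*s^13 + (8:ℂ)*s^14 + (-8:ℂ)*s^15 + (-8:ℂ)*Complex.I*s^11 + (8:ℂ)*Complex.I*s^12 + (-16:ℂ)*Complex.I*s^13 + (8:ℂ)*Complex.I*s^15)*h7 + ((-16:ℂ)*s^10 + (8:ℂ)*s^11 + (-8:ℂ)*s^13 + (16:ℂ)*s^14 + (-8:ℂ)*Complex.I*s^11 + (32:ℂ)*Complex.I*s^12 + (-8:ℂ)*Complex.I*s^13)*h8 + (((8:ℂ)*s^9 + (-8:ℂ)*s^10 + (24:ℂ)*s^11 + (-8:ℂ)*s^12 + (-8:ℂ)*s^13 + (8:ℂ)*s^15)*c 2 + ((-8:ℂ)*Complex.I*s^13 + (32:ℂ)*Complex.I*s^14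 + (-8:ℂ)*Complex.I*s^15)*c 4 + ((16:ℂ)*s^12 + (-8:ℂ)*s^13 + (8:ℂ)*s^15 + (-16:ℂ)*s^16 + (8:ℂ)*Complex.I*s^13 + (-32:ℂ)*Complex.I*s^14 + (8:ℂ)*Complex.I*s^15)*c 6 + ((-16:ℂ)*s^12 + (8:ℂ)*s^13 + (-8:ℂ)*s^15 + (16:ℂ)*s^16)*c 8)*hI
    have e3 : ((8:ℂ)*s^9*(s^2+1)*(s^2+Complex.I)*((2:ℂ)*s^2-(1+Complex.I)*s+2*Complex.I)) * c 3 = 0 := by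
      linear_combination (norm := ring1) ((4:ℂ)*s^7 + (-8:ℂ)*s^8 + (4:ℂ)*s^9 + (-4:ℂ)*s^11 + (8:ℂ)*s^12 + (-4:ℂ)*s^13 + (-4:ℂ)*Complex.I*s^7 + (8:ℂ)*Complex.I*s^8 + (-12:ℂ)*Complex.I*s^9 + (16:ℂ)*Complex.I*s^10 + (-12:ℂ)*Complex.I*s^11 + (8:ℂ)*Complex.I*s^12 + (-4:ℂ)*Complex.I*s^13)*h0 + ((4:ℂ)*s^7 + (-4:ℂ)*s^11 + (4:ℂ)*Complex.I*s^7 + (-4:ℂ)*Complex.I*s^11)*h1 + ((-4:ℂ)*s^9 + (-8:ℂ)*s^11 + (-4:ℂ)*s^13 + (-4:ℂ)*Complex.I*s^9 + (-8:ℂ)*Complex.I*s^11 + (-4:ℂ)*Complex.I*s^13)*h2 + ((4:ℂ)*s^9 + (-4:ℂ)*s^13 + (-4:ℂ)*Complex.I*s^9 + (4:ℂ)*Complex.I*s^13)*h3 + ((-4:ℂ)*s^7 + (-4:ℂ)*s^9 + (4:ℂ)*s^11 + (4:ℂ)*s^13 + (4:ℂ)*Complex.I*s^7 + (-8:ℂ)*Complex.I*s^8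 + (12:ℂ)*Complex.I*s^9 + (-16:ℂ)*Complex.I*s^10 + (12:ℂ)*Complex.I*s^11 + (-8:ℂ)*Complex.I*s^12 + (4:ℂ)*Complex.I*s^13)*h4 + ((-4:ℂ)*s^7 + (8:ℂ)*s^8 + (-8:ℂ)*s^9 + (16:ℂ)*s^10 + (-4:ℂ)*s^11 + (8:ℂ)*s^12 + (-4:ℂ)*Complex.I*s^7 + (8:ℂ)*Complex.I*s^8 + (4:ℂ)*Complex.I*s^11 + (-8:ℂ)*Complex.I*s^12)*h5 + ((4:ℂ)*s^7 + (8:ℂ)*s^9 + (4:ℂ)*s^11 + (-4:ℂ)*Complex.I*s^7 + (-8:ℂ)*Complex.I*s^9 + (-4:ℂ)*Complex.I*s^11)*h6 + ((-8:ℂ)*s^8 + (4:ℂ)*s^9 + (-16:ℂ)*s^10 + (8:ℂ)*s^11 + (-8:ℂ)*s^12 + (4:ℂ)*s^13 + (-8:ℂ)*Complex.I*s^8 + (4:ℂ)*Complex.I*s^9 + (8:ℂ)*Complex.I*s^12 + (-4:ℂ)*Complex.I*s^13)*h7 + ((-4:ℂ)*s^7 + (8:ℂ)*s^8 + (-4:ℂ)*s^9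 + (4:ℂ)*s^11 + (-8:ℂ)*s^12 + (4:ℂ)*s^13 + (4:ℂ)*Complex.I*s^7 + (12:ℂ)*Complex.I*s^9 + (12:ℂ)*Complex.I*s^11 + (4:ℂ)*Complex.I*s^13)*h8 + (((16:ℂ)*s^9 + (-8:ℂ)*s^10 + (16:ℂ)*s^11 + (-8:ℂ)*s^12)*c 3 + ((4:ℂ)*s^9 + (4:ℂ)*s^11 + (-4:ℂ)*s^13 + (-4:ℂ)*s^15 + (4:ℂ)*Complex.I*s^9 + (12:ℂ)*Complex.I*s^11 + (12:ℂ)*Complex.I*s^13 + (4:ℂ)*Complex.I*s^15)*c 4 + ((4:ℂ)*s^9 + (-8:ℂ)*s^10 + (4:ℂ)*s^11 + (-4:ℂ)*s^13 + (8:ℂ)*s^14 + (-4:ℂ)*s^15 + (-4:ℂ)*Complex.I*s^9 + (8:ℂ)*Complex.I*s^10 + (-12:ℂ)*Complex.I*s^11 + (16:ℂ)*Complex.I*s^12 + (-12:ℂ)*Complex.I*s^13 + (8:ℂ)*Complex.I*s^14 + (-4:ℂ)*Complex.I*s^15)*c 6 + ((-4:ℂ)*s^9 + (8:ℂ)*s^10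 + (-4:ℂ)*s^11 + (4:ℂ)*s^13 + (-8:ℂ)*s^14 + (4:ℂ)*s^15 + (4:ℂ)*Complex.I*s^9 + (-8:ℂ)*Complex.I*s^10 + (12:ℂ)*Complex.I*s^11 + (-16:ℂ)*Complex.I*s^12 + (12:ℂ)*Complex.I*s^13 + (-8:ℂ)*Complex.I*s^14 + (4:ℂ)*Complex.I*s^15)*c 8)*hI
    have e4 : ((8:ℂ)*s^9*(s^2+1)*(s^2+Complex.I)*((2:ℂ)*s^2-(1+Complex.I)*s+2*Complex.I)) * c 4 = 0 := by
      linear_combination (norm := ring1) ((4:ℂ)*s^7 + (-8:ℂ)*s^8 + (4:ℂ)*s^9 + (-4:ℂ)*s^11 + (8:ℂ)*s^12 + (-4:ℂ)*s^13 + (4:ℂ)*Complex.I*s^7 + (-8:ℂ)*Complex.I*s^8 + (-4:ℂ)*Complex.I*s^9 + (16:ℂ)*Complex.I*s^10 + (-4:ℂ)*Complex.I*s^11 + (-8:ℂ)*Complex.I*s^12 + (4:ℂ)*Complex.I*s^13)*h0 + ((-4:ℂ)*s^7 + (8:ℂ)*s^9 + (-4:ℂ)*s^11 + (4:ℂ)*Complex.I*s^7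 + (-8:ℂ)*Complex.I*s^9 + (4:ℂ)*Complex.I*s^11)*h1 + ((4:ℂ)*s^9 + (-4:ℂ)*s^13 + (-4:ℂ)*Complex.I*s^9 + (4:ℂ)*Complex.I*s^13)*h2 + ((4:ℂ)*s^9 + (-8:ℂ)*s^11 + (4:ℂ)*s^13 + (4:ℂ)*Complex.I*s^9 + (-8:ℂ)*Complex.I*s^11 + (4:ℂ)*Complex.I*s^13)*h3 + ((-4:ℂ)*s^7 + (8:ℂ)*s^8 + (-4:ℂ)*s^9 + (4:ℂ)*s^11 + (-8:ℂ)*s^12 + (4:ℂ)*s^13 + (-4:ℂ)*Complex.I*s^7 + (4:ℂ)*Complex.I*s^9 + (4:ℂ)*Complex.I*s^11 + (-4:ℂ)*Complex.I*s^13)*h4 + ((4:ℂ)*s^7 + (-8:ℂ)*s^8 + (-16:ℂ)*s^10 + (12:ℂ)*s^11 + (-8:ℂ)*s^12 + (-4:ℂ)*Complex.I*s^7 + (-8:ℂ)*Complex.I*s^8 + (8:ℂ)*Complex.I*s^9 + (-4:ℂ)*Complex.I*s^11 + (8:ℂ)*Complex.I*s^12)*h5 + ((4:ℂ)*s^7 +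 (-4:ℂ)*s^11 + (4:ℂ)*Complex.I*s^7 + (-4:ℂ)*Complex.I*s^11)*h6 + ((8:ℂ)*s^8 + (-12:ℂ)*s^9 + (16:ℂ)*s^10 + (8:ℂ)*s^12 + (-4:ℂ)*s^13 + (8:ℂ)*Complex.I*s^8 + (-4:ℂ)*Complex.I*s^9 + (8:ℂ)*Complex.I*s^11 + (-8:ℂ)*Complex.I*s^12 + (-4:ℂ)*Complex.I*s^13)*h7 + ((-4:ℂ)*s^7 + (-4:ℂ)*s^9 + (4:ℂ)*s^11 + (4:ℂ)*s^13 + (-4:ℂ)*Complex.I*s^7 + (8:ℂ)*Complex.I*s^8 + (4:ℂ)*Complex.I*s^9 + (-16:ℂ)*Complex.I*s^10 + (4:ℂ)*Complex.I*s^11 + (8:ℂ)*Complex.I*s^12 + (-4:ℂ)*Complex.I*s^13)*h8 + (((8:ℂ)*s^7 + (-8:ℂ)*s^9 + (8:ℂ)*s^11 + (-8:ℂ)*s^13)*c 2 + ((4:ℂ)*s^9 + (-8:ℂ)*s^10 + (4:ℂ)*s^11 + (-8:ℂ)*s^12 + (12:ℂ)*s^13 + (12:ℂ)*s^15 + (-4:ℂ)*Complex.I*s^9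 + (8:ℂ)*Complex.I*s^10 + (4:ℂ)*Complex.I*s^11 + (-16:ℂ)*Complex.I*s^12 + (4:ℂ)*Complex.I*s^13 + (8:ℂ)*Complex.I*s^14 + (-4:ℂ)*Complex.I*s^15)*c 4 + ((4:ℂ)*s^9 + (4:ℂ)*s^11 + (-4:ℂ)*s^13 + (-4:ℂ)*s^15 + (4:ℂ)*Complex.I*s^9 + (-8:ℂ)*Complex.I*s^10 + (-4:ℂ)*Complex.I*s^11 + (16:ℂ)*Complex.I*s^12 + (-4:ℂ)*Complex.I*s^13 + (-8:ℂ)*Complex.I*s^14 + (4:ℂ)*Complex.I*s^15)*c 6 + ((-4:ℂ)*s^9 + (8:ℂ)*s^10 + (-4:ℂ)*s^11 + (4:ℂ)*s^13 + (-8:ℂ)*s^14 + (4:ℂ)*s^15 + (-4:ℂ)*Complex.I*s^9 + (4:ℂ)*Complex.I*s^11 + (4:ℂ)*Complex.I*s^13 + (-4:ℂ)*Complex.I*s^15)*c 8)*hI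
    have e5 : ((8:ℂ)*s^9*(s^2+1)*(s^2+Complex.I)*((2:ℂ)*s^2-(1+Complex.I)*s+2*Complex.I)) * c 5 = 0 := by
      linear_combination (norm := ring1) ((-4:ℂ)*s^7 + (-8:ℂ)*s^8 + (12:ℂ)*s^9 + (-12:ℂ)*s^11 + (8:ℂ)*s^12 + (4:ℂ)*s^13 + (4:ℂ)*Complex.I*s^7 + (-4:ℂ)*Complex.I*s^9 + (16:ℂ)*Complex.I*s^10 + (-4:ℂ)*Complex.I*s^11 + (4:ℂ)*Complex.I*s^13)*h0 + ((4:ℂ)*s^7 + (-16:ℂ)*s^8 + (8:ℂ)*s^9 + (-4:ℂ)*s^11 + (4:ℂ)*Complex.I*s^7 + (-8:ℂ)*Complex.I*s^9 + (16:ℂ)*Complex.I*s^10 + (-4:ℂ)*Complex.I*s^11)*h1 + ((-8:ℂ)*s^8 + (4:ℂ)*s^9 + (-16:ℂ)*s^10 + (-8:ℂ)*s^12 + (-4:ℂ)*s^13 + (-8:ℂ)*Complex.I*s^8 + (-4:ℂ)*Complex.I*s^9 + (-8:ℂ)*Complex.I*s^11 + (8:ℂ)*Complex.I*s^12 + (-4:ℂ)*Complex.I*s^13)*h2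 + ((4:ℂ)*s^9 + (-8:ℂ)*s^11 + (16:ℂ)*s^12 + (-4:ℂ)*s^13 + (-4:ℂ)*Complex.I*s^9 + (16:ℂ)*Complex.I*s^10 + (-8:ℂ)*Complex.I*s^11 + (4:ℂ)*Complex.I*s^13)*h3 + ((4:ℂ)*s^7 + (4:ℂ)*s^9 + (-4:ℂ)*s^11 + (-4:ℂ)*s^13 + (-4:ℂ)*Complex.I*s^7 + (-12:ℂ)*Complex.I*s^9 + (-12:ℂ)*Complex.I*s^11 + (-4:ℂ)*Complex.I*s^13)*h4 + ((-4:ℂ)*s^7 + (16:ℂ)*s^8 + (-8:ℂ)*s^9 + (4:ℂ)*s^11 + (-4:ℂ)*Complex.I*s^7 + (8:ℂ)*Complex.I*s^9 + (-16:ℂ)*Complex.I*s^10 + (4:ℂ)*Complex.I*s^11)*h5 + ((4:ℂ)*s^7 + (8:ℂ)*s^8 + (16:ℂ)*s^10 + (-4:ℂ)*s^11 + (8:ℂ)*s^12 + (-4:ℂ)*Complex.I*s^7 + (8:ℂ)*Complex.I*s^8 + (-8:ℂ)*Complex.I*s^9 + (-4:ℂ)*Complex.I*s^11 + (-8:ℂ)*Complex.I*s^12)*h6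 + ((-4:ℂ)*s^9 + (8:ℂ)*s^11 + (-16:ℂ)*s^12 + (4:ℂ)*s^13 + (4:ℂ)*Complex.I*s^9 + (-16:ℂ)*Complex.I*s^10 + (8:ℂ)*Complex.I*s^11 + (-4:ℂ)*Complex.I*s^13)*h7 + ((-4:ℂ)*s^7 + (8:ℂ)*s^8 + (-20:ℂ)*s^9 + (20:ℂ)*s^11 + (-8:ℂ)*s^12 + (4:ℂ)*s^13 + (4:ℂ)*Complex.I*s^7 + (28:ℂ)*Complex.I*s^9 + (-16:ℂ)*Complex.I*s^10 + (28:ℂ)*Complex.I*s^11 + (4:ℂ)*Complex.I*s^13)*h8 + (((16:ℂ)*s^8 + (-8:ℂ)*s^9 + (8:ℂ)*s^11 + (-16:ℂ)*s^12)*c 2 + ((-4:ℂ)*s^9 + (-4:ℂ)*s^11 + (4:ℂ)*s^13 + (4:ℂ)*s^15 + (4:ℂ)*Complex.I*s^9 + (28:ℂ)*Complex.I*s^11 + (-16:ℂ)*Complex.I*s^12 + (28:ℂ)*Complex.I*s^13 + (4:ℂ)*Complex.I*s^15)*c 4 + ((16:ℂ)*s^9 + (-8:ℂ)*s^10 + (16:ℂ)*s^11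 + (-8:ℂ)*s^12)*c 5 + ((4:ℂ)*s^9 + (-8:ℂ)*s^10 + (20:ℂ)*s^11 + (-20:ℂ)*s^13 + (8:ℂ)*s^14 + (-4:ℂ)*s^15 + (4:ℂ)*Complex.I*s^9 + (-4:ℂ)*Complex.I*s^11 + (16:ℂ)*Complex.I*s^12 + (-4:ℂ)*Complex.I*s^13 + (4:ℂ)*Complex.I*s^15)*c 6 + ((4:ℂ)*s^9 + (8:ℂ)*s^10 + (-12:ℂ)*s^11 + (12:ℂ)*s^13 + (-8:ℂ)*s^14 + (-4:ℂ)*s^15 + (-4:ℂ)*Complex.I*s^9 + (-12:ℂ)*Complex.I*s^11 + (-12:ℂ)*Complex.I*s^13 + (-4:ℂ)*Complex.I*s^15)*c 8)*hI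
    have e6 : ((8:ℂ)*s^9*(s^2+1)*(s^2+Complex.I)*((2:ℂ)*s^2-(1+Complex.I)*s+2*Complex.I)) * c 6 = 0 := by
      linear_combination (norm := ring1) ((-4:ℂ)*s^7 + (-20:ℂ)*s^9 + (20:ℂ)*s^11 + (4:ℂ)*s^13 + (-4:ℂ)*Complex.I*s^7 + (-8:ℂ)*Complex.I*s^8 + (20:ℂ)*Complex.I*s^9 + (20:ℂ)*Complex.I*s^11 + (-8:ℂ)*Complex.I*s^12 + (-4:ℂ)*Complex.I*s^13)*h0 + ((-4:ℂ)*s^7 + (16:ℂ)*s^8 + (-4:ℂ)*s^11 + (4:ℂ)*Complex.I*s^7 + (-16:ℂ)*Complex.I*s^10 + (4:ℂ)*Complex.I*s^11)*h1 + ((8:ℂ)*s^8 + (-4:ℂ)*s^9 + (16:ℂ)*s^10 + (-8:ℂ)*s^11 + (8:ℂ)*s^12 + (-4:ℂ)*s^13 + (8:ℂ)*Complex.I*s^8 + (-4:ℂ)*Complex.I*s^9 + (-8:ℂ)*Complex.I*s^12 + (4:ℂ)*Complex.I*s^13)*h2 + ((4:ℂ)*s^9 + (-16:ℂ)*s^12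 + (4:ℂ)*s^13 + (4:ℂ)*Complex.I*s^9 + (-16:ℂ)*Complex.I*s^10 + (4:ℂ)*Complex.I*s^13)*h3 + ((4:ℂ)*s^7 + (4:ℂ)*s^9 + (-4:ℂ)*s^11 + (-4:ℂ)*s^13 + (4:ℂ)*Complex.I*s^7 + (-4:ℂ)*Complex.I*s^9 + (-4:ℂ)*Complex.I*s^11 + (4:ℂ)*Complex.I*s^13)*h4 + ((4:ℂ)*s^7 + (-16:ℂ)*s^8 + (4:ℂ)*s^11 + (-4:ℂ)*Complex.I*s^7 + (16:ℂ)*Complex.I*s^10 + (-4:ℂ)*Complex.I*s^11)*h5 + ((4:ℂ)*s^7 + (-8:ℂ)*s^8 + (8:ℂ)*s^9 + (-16:ℂ)*s^10 + (4:ℂ)*s^11 + (-8:ℂ)*s^12 + (4:ℂ)*Complex.I*s^7 + (-8:ℂ)*Complex.I*s^8 + (-4:ℂ)*Complex.I*s^11 + (8:ℂ)*Complex.I*s^12)*h6 + ((-4:ℂ)*s^9 + (16:ℂ)*s^12 + (-4:ℂ)*s^13 + (-4:ℂ)*Complex.I*s^9 + (16:ℂ)*Complex.I*s^10 + (-4:ℂ)*Complex.I*s^13)*h7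 + ((-4:ℂ)*s^7 + (12:ℂ)*s^9 + (-12:ℂ)*s^11 + (4:ℂ)*s^13 + (-4:ℂ)*Complex.I*s^7 + (8:ℂ)*Complex.I*s^8 + (-12:ℂ)*Complex.I*s^9 + (-12:ℂ)*Complex.I*s^11 + (8:ℂ)*Complex.I*s^12 + (-4:ℂ)*Complex.I*s^13)*h8 + (((8:ℂ)*s^7 + (-16:ℂ)*s^8 + (16:ℂ)*s^12 + (-8:ℂ)*s^13)*c 2 + ((-4:ℂ)*s^9 + (-4:ℂ)*s^11 + (4:ℂ)*s^13 + (4:ℂ)*s^15 + (-4:ℂ)*Complex.I*s^9 + (8:ℂ)*Complex.I*s^10 + (-12:ℂ)*Complex.I*s^11 + (-12:ℂ)*Complex.I*s^13 + (8:ℂ)*Complex.I*s^14 + (-4:ℂ)*Complex.I*s^15)*c 4 + ((4:ℂ)*s^9 + (-12:ℂ)*s^11 + (-8:ℂ)*s^12 + (28:ℂ)*s^13 + (-8:ℂ)*s^14 + (12:ℂ)*s^15 + (-4:ℂ)*Complex.I*s^9 + (-8:ℂ)*Complex.I*s^10 + (20:ℂ)*Complex.I*s^11 + (20:ℂ)*Complex.I*s^13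 + (-8:ℂ)*Complex.I*s^14 + (-4:ℂ)*Complex.I*s^15)*c 6 + ((4:ℂ)*s^9 + (20:ℂ)*s^11 + (-20:ℂ)*s^13 + (-4:ℂ)*s^15 + (4:ℂ)*Complex.I*s^9 + (-4:ℂ)*Complex.I*s^11 + (-4:ℂ)*Complex.I*s^13 + (4:ℂ)*Complex.I*s^15)*c 8)*hI
    have e7 : ((8:ℂ)*s^9*(s^2+1)*(s^2+Complex.I)*((2:ℂ)*s^2-(1+Complex.I)*s+2*Complex.I)) * c 7 = 0 := by
      linear_combination (norm := ring1) ((-4:ℂ)*s^7 + (-8:ℂ)*s^8 + (12:ℂ)*s^9 + (-12:ℂ)*s^11 + (8:ℂ)*s^12 + (4:ℂ)*s^13 + (4:ℂ)*Complex.I*s^7 + (-4:ℂ)*Complex.I*s^9 + (16:ℂ)*Complex.I*s^10 + (-4:ℂ)*Complex.I*s^11 + (4:ℂ)*Complex.I*s^13)*h0 + ((4:ℂ)*s^7 + (-8:ℂ)*s^8 + (16:ℂ)*s^10 + (-12:ℂ)*s^11 + (8:ℂ)*s^12 + (4:ℂ)*Complex.I*s^7 + (8:ℂ)*Complex.I*s^8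 + (-8:ℂ)*Complex.I*s^9 + (16:ℂ)*Complex.I*s^10 + (-4:ℂ)*Complex.I*s^11 + (-8:ℂ)*Complex.I*s^12)*h1 + ((-4:ℂ)*s^9 + (-8:ℂ)*s^11 + (-4:ℂ)*s^13 + (-4:ℂ)*Complex.I*s^9 + (-8:ℂ)*Complex.I*s^11 + (-4:ℂ)*Complex.I*s^13)*h2 + ((-8:ℂ)*s^8 + (12:ℂ)*s^9 + (-16:ℂ)*s^10 + (8:ℂ)*s^12 + (-4:ℂ)*s^13 + (-8:ℂ)*Complex.I*s^8 + (-4:ℂ)*Complex.I*s^9 + (16:ℂ)*Complex.I*s^10 + (-8:ℂ)*Complex.I*s^11 + (8:ℂ)*Complex.I*s^12 + (4:ℂ)*Complex.I*s^13)*h3 + ((-4:ℂ)*s^7 + (-4:ℂ)*s^9 + (4:ℂ)*s^11 + (4:ℂ)*s^13 + (4:ℂ)*Complex.I*s^7 + (-8:ℂ)*Complex.I*s^8 + (12:ℂ)*Complex.I*s^9 + (-16:ℂ)*Complex.I*s^10 + (12:ℂ)*Complex.I*s^11 + (-8:ℂ)*Complex.I*s^12 + (4:ℂ)*Complex.I*s^13)*h4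 + ((-4:ℂ)*s^7 + (16:ℂ)*s^8 + (-8:ℂ)*s^9 + (4:ℂ)*s^11 + (-4:ℂ)*Complex.I*s^7 + (8:ℂ)*Complex.I*s^9 + (-16:ℂ)*Complex.I*s^10 + (4:ℂ)*Complex.I*s^11)*h5 + ((4:ℂ)*s^7 + (8:ℂ)*s^9 + (4:ℂ)*s^11 + (-4:ℂ)*Complex.I*s^7 + (-8:ℂ)*Complex.I*s^9 + (-4:ℂ)*Complex.I*s^11)*h6 + ((-4:ℂ)*s^9 + (8:ℂ)*s^11 + (-16:ℂ)*s^12 + (4:ℂ)*s^13 + (4:ℂ)*Complex.I*s^9 + (-16:ℂ)*Complex.I*s^10 + (8:ℂ)*Complex.I*s^11 + (-4:ℂ)*Complex.I*s^13)*h7 + ((4:ℂ)*s^7 + (8:ℂ)*s^8 + (-12:ℂ)*s^9 + (12:ℂ)*s^11 + (-8:ℂ)*s^12 + (-4:ℂ)*s^13 + (-4:ℂ)*Complex.I*s^7 + (8:ℂ)*Complex.I*s^8 + (4:ℂ)*Complex.I*s^9 + (4:ℂ)*Complex.I*s^11 + (8:ℂ)*Complex.I*s^12 + (-4:ℂ)*Complex.I*s^13)*h8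 + (((16:ℂ)*s^8 + (-8:ℂ)*s^9 + (8:ℂ)*s^11 + (-16:ℂ)*s^12)*c 2 + ((4:ℂ)*s^9 + (4:ℂ)*s^11 + (-4:ℂ)*s^13 + (-4:ℂ)*s^15 + (-4:ℂ)*Complex.I*s^9 + (8:ℂ)*Complex.I*s^10 + (4:ℂ)*Complex.I*s^11 + (4:ℂ)*Complex.I*s^13 + (8:ℂ)*Complex.I*s^14 + (-4:ℂ)*Complex.I*s^15)*c 4 + ((-4:ℂ)*s^9 + (-8:ℂ)*s^10 + (12:ℂ)*s^11 + (-12:ℂ)*s^13 + (8:ℂ)*s^14 + (4:ℂ)*s^15 + (4:ℂ)*Complex.I*s^9 + (-4:ℂ)*Complex.I*s^11 + (16:ℂ)*Complex.I*s^12 + (-4:ℂ)*Complex.I*s^13 + (4:ℂ)*Complex.I*s^15)*c 6 + ((16:ℂ)*s^9 + (-8:ℂ)*s^10 + (16:ℂ)*s^11 + (-8:ℂ)*s^12)*c 7 + ((4:ℂ)*s^9 + (8:ℂ)*s^10 + (-12:ℂ)*s^11 + (12:ℂ)*s^13 + (-8:ℂ)*s^14 + (-4:ℂ)*s^15 + (4:ℂ)*Complex.I*s^9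 + (-8:ℂ)*Complex.I*s^10 + (12:ℂ)*Complex.I*s^11 + (-16:ℂ)*Complex.I*s^12 + (12:ℂ)*Complex.I*s^13 + (-8:ℂ)*Complex.I*s^14 + (4:ℂ)*Complex.I*s^15)*c 8)*hI
    have e8 : ((8:ℂ)*s^9*(s^2+1)*(s^2+Complex.I)*((2:ℂ)*s^2-(1+Complex.I)*s+2*Complex.I)) * c 8 = 0 := by
      linear_combination (norm := ring1) ((-4:ℂ)*s^7 + (-20:ℂ)*s^9 + (20:ℂ)*s^11 + (4:ℂ)*s^13 + (-4:ℂ)*Complex.I*s^7 + (-8:ℂ)*Complex.I*s^8 + (20:ℂ)*Complex.I*s^9 + (20:ℂ)*Complex.I*s^11 + (-8:ℂ)*Complex.I*s^12 + (-4:ℂ)*Complex.I*s^13)*h0 + ((-4:ℂ)*s^7 + (8:ℂ)*s^8 + (8:ℂ)*s^9 + (-16:ℂ)*s^10 + (4:ℂ)*s^11 + (-8:ℂ)*s^12 + (4:ℂ)*Complex.I*s^7 + (-8:ℂ)*Complex.I*s^8 + (-16:ℂ)*Complex.I*s^10 + (4:ℂ)*Complex.I*s^11 + (8:ℂ)*Complex.I*s^12)*h1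 + ((4:ℂ)*s^9 + (-4:ℂ)*s^13 + (-4:ℂ)*Complex.I*s^9 + (4:ℂ)*Complex.I*s^13)*h2 + ((8:ℂ)*s^8 + (-4:ℂ)*s^9 + (16:ℂ)*s^10 + (-8:ℂ)*s^11 + (-8:ℂ)*s^12 + (4:ℂ)*s^13 + (8:ℂ)*Complex.I*s^8 + (4:ℂ)*Complex.I*s^9 + (-16:ℂ)*Complex.I*s^10 + (-8:ℂ)*Complex.I*s^12 + (4:ℂ)*Complex.I*s^13)*h3 + ((-4:ℂ)*s^7 + (8:ℂ)*s^8 + (-4:ℂ)*s^9 + (4:ℂ)*s^11 + (-8:ℂ)*s^12 + (4:ℂ)*s^13 + (-4:ℂ)*Complex.I*s^7 + (4:ℂ)*Complex.I*s^9 + (4:ℂ)*Complex.I*s^11 + (-4:ℂ)*Complex.I*s^13)*h4 + ((4:ℂ)*s^7 + (-16:ℂ)*s^8 + (4:ℂ)*s^11 + (-4:ℂ)*Complex.I*s^7 + (16:ℂ)*Complex.I*s^10 + (-4:ℂ)*Complex.I*s^11)*h5 + ((4:ℂ)*s^7 + (-4:ℂ)*s^11 + (4:ℂ)*Complex.I*s^7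 + (-4:ℂ)*Complex.I*s^11)*h6 + ((-4:ℂ)*s^9 + (16:ℂ)*s^12 + (-4:ℂ)*s^13 + (-4:ℂ)*Complex.I*s^9 + (16:ℂ)*Complex.I*s^10 + (-4:ℂ)*Complex.I*s^13)*h7 + ((4:ℂ)*s^7 + (-8:ℂ)*s^8 + (20:ℂ)*s^9 + (-20:ℂ)*s^11 + (8:ℂ)*s^12 + (-4:ℂ)*s^13 + (4:ℂ)*Complex.I*s^7 + (8:ℂ)*Complex.I*s^8 + (-20:ℂ)*Complex.I*s^9 + (-20:ℂ)*Complex.I*s^11 + (8:ℂ)*Complex.I*s^12 + (4:ℂ)*Complex.I*s^13)*h8 + (((8:ℂ)*s^7 + (-16:ℂ)*s^8 + (16:ℂ)*s^12 + (-8:ℂ)*s^13)*c 2 + ((4:ℂ)*s^9 + (-8:ℂ)*s^10 + (4:ℂ)*s^11 + (-4:ℂ)*s^13 + (8:ℂ)*s^14 + (-4:ℂ)*s^15 + (4:ℂ)*Complex.I*s^9 + (8:ℂ)*Complex.I*s^10 + (-20:ℂ)*Complex.I*s^11 + (-20:ℂ)*Complex.I*s^13 + (8:ℂ)*Complex.I*s^14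 + (4:ℂ)*Complex.I*s^15)*c 4 + ((-4:ℂ)*s^9 + (8:ℂ)*s^10 + (-20:ℂ)*s^11 + (20:ℂ)*s^13 + (-8:ℂ)*s^14 + (4:ℂ)*s^15 + (-4:ℂ)*Complex.I*s^9 + (-8:ℂ)*Complex.I*s^10 + (20:ℂ)*Complex.I*s^11 + (20:ℂ)*Complex.I*s^13 + (-8:ℂ)*Complex.I*s^14 + (-4:ℂ)*Complex.I*s^15)*c 6 + ((4:ℂ)*s^9 + (20:ℂ)*s^11 + (-8:ℂ)*s^12 + (-4:ℂ)*s^13 + (-8:ℂ)*s^14 + (12:ℂ)*s^15 + (-4:ℂ)*Complex.I*s^9 + (4:ℂ)*Complex.I*s^11 + (4:ℂ)*Complex.I*s^13 + (-4:ℂ)*Complex.I*s^15)*c 8)*hI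
    intro k
    fin_cases k
    · exact (mul_eq_zero.mp e0).resolve_left hD
    · exact (mul_eq_zero.mp e1).resolve_left hD
    · exact (mul_eq_zero.mp e2).resolve_left hD
    · exact (mul_eq_zero.mp e3).resolve_left hD
    · exact (mul_eq_zero.mp e4).resolve_left hD
    · exact (mul_eq_zero.mp e5).resolve_left hD
    · exact (mul_eq_zero.mp e6).resolve_left hD
    · exact (mul_eq_zero.mp e7).resolve_left hD
    · exact (mul_eq_zero.mp e8).resolve_left hD
  refine ⟨hli, hli.span_eq_top_of_card_eq_finrank ?_⟩
  simp
end

section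
/- Let t > 0 and let a, b, c be reals with a + b·t = 1 and c + a·t = t. Then for each k = 1,…,9, the vector ψ_k ⊗ conj(φ_k) satisfies ⟨ψ_k ⊗ conj(φ_k) | (6·W[a,b,c])^Γ | ψ_k ⊗ conj(φ_k)⟩ = 0, where Γ denotes partial transposition with respect to the second tensor factor, provided also a + b + c = 2. -/
open Complex

/-- Kronecker product of vectors in ℂ³, as a vector indexed by pairs. -/
def kronP (ψ φ : Fin 3 → ℂ) : Fin 3 × Fin 3 → ℂ := fun p => ψ p.1 * φ p.2

/-- The matrix `6·W[a,b,c]`: the (unnormalized) generalized Choi entanglement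
witness, indexed by pairs in `{0,1,2}²`. -/
def W6 (a b c : ℝ) : Matrix (Fin 3 × Fin 3) (Fin 3 × Fin 3) ℂ :=
  Matrix.of fun p q =>
    if p = q then
      (if p.2 = p.1 then (a : ℂ) else if p.2 = p.1 + 1 then (b : ℂ) else (c : ℂ))
    else if p.1 = p.2 ∧ q.1 = q.2 then -1 else 0

/-- Partial transposition with respect to the second tensor factor. -/
def PT3 (W : Matrix (Fin 3 × Fin 3) (Fin 3 × Fin 3) ℂ) :
    Matrix (Fin 3 × Fin 3) (Fin 3 × Fin 3) ℂ :=
  Matrix.of fun p q => W (p.1, q.2) (q.1, p.2)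

/-- Diagonal coefficients of `W6` arranged as a 3×3 table. -/
def dvec (a b c : ℝ) : Fin 3 → Fin 3 → ℂ :=
  ![![(a:ℂ), b, c], ![c, a, b], ![b, c, a]]

lemma rt_sq (t : ℝ) (ht : 0 ≤ t) : rt t * rt t = (t : ℂ) := by
  simp [rt, ← Complex.ofReal_mul, Real.mul_self_sqrt ht]

lemma conj_rt (t : ℝ) : starRingEnd ℂ (rt t) = rt t := by simp [rt]

set_option maxHeartbeats 1000000 in
lemma form_eq (a b c : ℝ) (ψ φ : Fin 3 → ℂ) :
    dotProduct (star (kronP ψ φ)) ((PT3 (W6 a b c)).mulVec (kronP ψ φ)) =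
      (∑ i, ∑ j, dvec a b c i j * (starRingEnd ℂ (ψ i) * ψ i) * (starRingEnd ℂ (φ j) * φ j))
      - ∑ i, ∑ j, (if i = j then 0 else
          (starRingEnd ℂ (ψ i) * φ i) * (ψ j * starRingEnd ℂ (φ j))) := by
  simp only [dotProduct, Matrix.mulVec, Fintype.sum_prod_type,
    Fin.sum_univ_three, kronP, W6, PT3, Matrix.of_apply, dvec,
    Matrix.cons_val_zero, Matrix.cons_val_one, Matrix.head_cons,
    Matrix.cons_val_two, Matrix.tail_cons, Pi.star_apply, RCLike.star_def,
    map_mul]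
  norm_num [Prod.ext_iff, Fin.ext_iff, Fin.val_add, show ((3:Fin 3):ℕ) = 0 from rfl]
  ring

set_option maxHeartbeats 1000000 in
theorem stmt_10 (t : ℝ) (ht : 0 < t) (a b c : ℝ)
    (h1 : a + b * t = 1) (h2 : c + a * t = t) (hsum : a + b + c = 2) (k : Fin 9) :
    dotProduct
      (star (kronP (psi t k) (fun i => starRingEnd ℂ (phi t k i))))
      ((PT3 (W6 a b c)).mulVec
        (kronP (psi t k) (fun i => starRingEnd ℂ (phi t k i)))) = 0 := by
  have h1' : (a : ℂ) + b * t = 1 := by exact_mod_cast congrArg (Complex.ofReal) h1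
  have h2' : (c : ℂ) + a * t = t := by exact_mod_cast congrArg (Complex.ofReal) h2
  have hs' : (a : ℂ) + b + c = 2 := by exact_mod_cast congrArg (Complex.ofReal) hsum
  have hrt : rt t * rt t = (t : ℂ) := rt_sq t ht.le
  fin_cases k <;>
  · rw [form_eq]
    simp only [psi, phi, dvec, Fin.sum_univ_three,
      Matrix.cons_val_zero, Matrix.cons_val_one, Matrix.head_cons,
      Matrix.cons_val_two, Matrix.tail_cons, Fin.isValue,
      map_mul, map_one, map_neg, map_zero, conj_rt, Complex.conj_I,
      Complex.conj_ofReal, Fin.mk_zero, Fin.mk_one, Matrix.cons_val, Fin.reduceFinMk]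
    norm_num [Fin.ext_iff, conj_rt, Matrix.cons_val]
    ring_nf
    try simp only [Complex.I_sq]
    try ring_nf
    first
    | linear_combination 3 * hs'
    | linear_combination (t:ℂ)^2 * h1' + (t:ℂ) * h2'
        + ((a:ℂ) * (rt t * rt t) + b * t^2 - 2*t + c + a*t) * hrt
end
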